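/- Under the expected signed propagation dynamics (C dividing N, equal class sizes, p, q > 0, X with rows u_{y_i}, h̄_c^{(K)} = (C/N) Σ_{i : y_i = c} (P̄^K X)_i), if the number of classes is C = 2 with the two classes a ≠ b, then for every K ∈ ℕ the difference of class means is exactly preserved: h̄_a^{(K)} − h̄_b^{(K)} = u_a − u_b; i.e., in the binary case signed message passing does not suffer from oversmoothing. -/

import Mathlib

set_option maxHeartbeats 1000000


theorem stmt_5 (N f : ℕ) (hN : 0 < N) (hdvd : 2 ∣ N)
    (y : Fin N → Fin 2)
    (hclass : ∀ c : Fin 2,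
      (Finset.univ.filter (fun i => y i = c)).card = N / 2)
    (p q : ℝ) (hp : 0 < p) (hq : 0 < q)
    (u : Fin 2 → Fin f → ℝ)
    (P : Matrix (Fin N) (Fin N) ℝ)
    (hP : ∀ i j, P i j =
      if y i = y j then (((2 : ℕ) : ℝ) / (N * (p + (((2 : ℕ) : ℝ) - 1) * q))) * p
      else -((((2 : ℕ) : ℝ) / (N * (p + (((2 : ℕ) : ℝ) - 1) * q))) * q))
    (X : Matrix (Fin N) (Fin f) ℝ)
    (hX : ∀ i, X i = u (y i))
    (hbar : Fin 2 → ℕ → Fin f → ℝ)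
    (hhbar : ∀ (c : Fin 2) (K : ℕ),
      hbar c K = (((2 : ℕ) : ℝ) / N) •
        ∑ i ∈ Finset.univ.filter (fun i => y i = c), (P ^ K * X) i)
    (a b : Fin 2) (hab : a ≠ b) :
    ∀ K : ℕ, hbar a K - hbar b K = u a - u b := by
  have hpq : (0:ℝ) < p + q := by linarith
  have hNR : (0:ℝ) < N := by exact_mod_cast hN
  have hden : (N:ℝ) * (p + q) ≠ 0 := ne_of_gt (by positivity)
  set γ : ℝ := 2 / ((N:ℝ) * (p + q)) with hγ
  have hPs : ∀ i j, P i j = if y i = y j then γ * p else -(γ * q) := by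
    intro i j; rw [hP]; norm_num [hγ]
  have hcover : ∀ x : Fin 2, (¬ x = a) ↔ x = b := by
    intro x; fin_cases a <;> fin_cases b <;> fin_cases x <;> simp_all
  have hcover' : ∀ x : Fin 2, (¬ x = b) ↔ x = a := by
    intro x; fin_cases a <;> fin_cases b <;> fin_cases x <;> simp_all
  set S : Fin 2 → Finset (Fin N) := fun c => Finset.univ.filter (fun i => y i = c) with hS
  have hmem : ∀ c i, i ∈ S c ↔ y i = c := by intro c i; simp [hS]
  have hfa : Finset.univ.filter (fun j => ¬ y j = a) = S b := by
    ext j; simp [hS, hcover]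
  have hfb : Finset.univ.filter (fun j => ¬ y j = b) = S a := by
    ext j; simp [hS, hcover']
  have hcN : ((N/2 : ℕ) : ℝ) * 2 = N := by
    obtain ⟨m, rfl⟩ := hdvd
    rw [Nat.mul_div_cancel_left m (by norm_num : 0 < 2)]
    push_cast; ring
  have key : ∀ (K : ℕ) (k : Fin f),
      (∑ i ∈ S a, (P^K * X : Matrix (Fin N) (Fin f) ℝ) i k)
        - (∑ i ∈ S b, (P^K * X : Matrix (Fin N) (Fin f) ℝ) i k)
      = ((N:ℝ)/2) * (u a k - u b k) := by
    intro K
    induction K with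
    | zero =>
      intro k
      simp only [pow_zero, Matrix.one_mul]
      have hA : ∀ c : Fin 2, ∑ i ∈ S c, X i k = ((N/2 : ℕ) : ℝ) * u c k := by
        intro c
        rw [Finset.sum_congr rfl (fun i hi => by
          rw [hX i, (hmem c i).mp hi])]
        rw [Finset.sum_const, hclass c, nsmul_eq_mul]
      rw [hA a, hA b]
      have : ((N/2 : ℕ) : ℝ) = (N:ℝ)/2 := by
        field_simp
        linarith [hcN]
      rw [this]; ring
    | succ K ih =>
      intro k
      have hM : P ^ (K+1) * X = P * (P^K * X) := by
        rw [pow_succ', Matrix.mul_assoc]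
      set M := P^K * X with hMdef
      have hrow : ∀ i, (P * M) i k =
          γ * p * (∑ j ∈ S (y i), M j k)
            - γ * q * (∑ j ∈ Finset.univ.filter (fun j => ¬ y j = y i), M j k) := by
        intro i
        rw [Matrix.mul_apply,
          ← Finset.sum_filter_add_sum_filter_not Finset.univ (fun j => y j = y i)]
        have h1 : ∑ j ∈ Finset.univ.filter (fun j => y j = y i), P i j * M j k
            = γ * p * ∑ j ∈ S (y i), M j k := by
          rw [show (Finset.univ.filter (fun j => y j = y i)) = S (y i) from rfl,
            Finset.mul_sum]
          refine Finset.sum_congr rfl (fun j hj => ?_)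
          rw [hPs i j, if_pos ((hmem (y i) j).mp hj).symm]
        have h2 : ∑ j ∈ Finset.univ.filter (fun j => ¬ y j = y i), P i j * M j k
            = -(γ * q) * ∑ j ∈ Finset.univ.filter (fun j => ¬ y j = y i), M j k := by
          rw [Finset.mul_sum]
          refine Finset.sum_congr rfl (fun j hj => ?_)
          have hj' : ¬ y j = y i := (Finset.mem_filter.mp hj).2
          rw [hPs i j, if_neg (fun h => hj' h.symm)]
        rw [h1, h2]; ring
      have hsum : ∀ c c' : Fin 2,
          (Finset.univ.filter (fun j => ¬ y j = c)) = S c' →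
          ∑ i ∈ S c, (P * M) i k
            = ((N/2 : ℕ) : ℝ) * (γ * p * (∑ j ∈ S c, M j k) - γ * q * (∑ j ∈ S c', M j k)) := by
        intro c c' hcc
        rw [Finset.sum_congr rfl (fun i hi => by
          rw [hrow i, (hmem c i).mp hi, hcc])]
        rw [Finset.sum_const, hclass c, nsmul_eq_mul]
      rw [hM]
      rw [hsum a b hfa, hsum b a hfb]
      have expand : ((N/2 : ℕ) : ℝ) * (γ * p * (∑ j ∈ S a, M j k) - γ * q * (∑ j ∈ S b, M j k))
          - ((N/2 : ℕ) : ℝ) * (γ * p * (∑ j ∈ S b, M j k) - γ * q * (∑ j ∈ S a, M j k))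
          = (((N/2 : ℕ) : ℝ) * γ * (p + q)) * ((∑ j ∈ S a, M j k) - (∑ j ∈ S b, M j k)) := by
        ring
      rw [expand]
      have hone : ((N/2 : ℕ) : ℝ) * γ * (p + q) = 1 := by
        rw [hγ]; field_simp
        linarith [hcN]
      rw [hone, one_mul, ih k]
  intro K
  funext k
  have h2N : ((2:ℕ):ℝ) / N ≠ 0 := by positivity
  rw [hhbar a K, hhbar b K]
  show (((2:ℕ):ℝ)/N) * (∑ i ∈ S a, (P^K * X) i) k - (((2:ℕ):ℝ)/N) * (∑ i ∈ S b, (P^K * X) i) k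
      = u a k - u b k
  rw [Finset.sum_apply k (S a) (fun i => (P^K * X) i), Finset.sum_apply k (S b) (fun i => (P^K * X) i)]
  rw [show (((2:ℕ):ℝ)/N) * (∑ i ∈ S a, (P^K * X) i k) - (((2:ℕ):ℝ)/N) * (∑ i ∈ S b, (P^K * X) i k)
      = (((2:ℕ):ℝ)/N) * ((∑ i ∈ S a, (P^K * X) i k) - (∑ i ∈ S b, (P^K * X) i k)) from by ring,
    key K k]
  push_cast
  field_simp
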